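/- arXiv:2312.11304 — 2 statements merged into one kernel-verified Lean document; each statement's English description precedes it below -/
import Mathlib

section
/- Let H be a Hilbert space, C ⊂ H a closed convex cone, and E : H → [0,∞] a convex lower semicontinuous functional. Fix h > 0 and define the proximal sequence ω_{k+1} = argmin over ω ∈ C of E(ω) + (1/2h)·‖ω − ω_k‖². If ω ∈ C satisfies E(ω) = 0, then the sequence of inner products ⟨ω, ω_k⟩ is monotonically nondecreasing in k. -/
open scoped RealInnerProductSpace

/-- Proximal algorithm on a closed convex cone `C` in a Hilbert space `H`:
if `ω ∈ C` satisfies `E ω = 0`, then `⟪ω, ω_k⟫` is monotonically nondecreasing. -/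
theorem stmt10 {H : Type*} [NormedAddCommGroup H] [InnerProductSpace ℝ H]
    [CompleteSpace H]
    (C : Set H) (hCclosed : IsClosed C) (hCconv : Convex ℝ C)
    (hCcone : ∀ t : ℝ, 0 ≤ t → ∀ x ∈ C, t • x ∈ C)
    (E : H → ℝ) (hE0 : ∀ w, 0 ≤ E w) (hEconv : ConvexOn ℝ Set.univ E)
    (hElsc : LowerSemicontinuous E)
    (hEhom : ∀ t : ℝ, 0 ≤ t → ∀ w, E (t • w) = t * E w)
    (h : ℝ) (hh : 0 < h)
    (seq : ℕ → H) (hseq0 : seq 0 ∈ C)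
    (hseq : ∀ k : ℕ, seq (k + 1) ∈ C ∧
      IsMinOn (fun w => E w + (1 / (2 * h)) * ‖w - seq k‖ ^ 2) C (seq (k + 1)))
    (ω : H) (hω : ω ∈ C) (hEω : E ω = 0) :
    Monotone fun k : ℕ => ⟪ω, seq k⟫ := by
  -- C is closed under addition
  have hadd : ∀ x ∈ C, ∀ y ∈ C, x + y ∈ C := by
    intro x hx y hy
    have hmid : (1/2 : ℝ) • x + (1/2 : ℝ) • y ∈ C :=
      hCconv hx hy (by norm_num) (by norm_num) (by norm_num)
    have := hCcone 2 (by norm_num) _ hmid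
    have heq : (2 : ℝ) • ((1/2 : ℝ) • x + (1/2 : ℝ) • y) = x + y := by
      rw [smul_add, smul_smul, smul_smul]; norm_num
    rwa [heq] at this
  -- subadditivity of E
  have hsub : ∀ x y : H, E (x + y) ≤ E x + E y := by
    intro x y
    have hmid := hEconv.2 (Set.mem_univ x) (Set.mem_univ y)
      (by norm_num : (0:ℝ) ≤ 1/2) (by norm_num : (0:ℝ) ≤ 1/2) (by norm_num)
    have heq : (2 : ℝ) • ((1/2 : ℝ) • x + (1/2 : ℝ) • y) = x + y := by
      rw [smul_add, smul_smul, smul_smul]; norm_num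
    have h2 := hEhom 2 (by norm_num) ((1/2 : ℝ) • x + (1/2 : ℝ) • y)
    rw [heq] at h2
    simp only [smul_eq_mul] at hmid
    rw [h2]; linarith
  apply monotone_nat_of_le_succ
  intro k
  obtain ⟨huC, hmin⟩ := hseq k
  set u := seq (k + 1) with hu
  set p := seq k with hp
  -- key inequality for all t ≥ 0
  have key : ∀ t : ℝ, 0 ≤ t → 0 ≤ 2 * t * ⟪ω, u - p⟫ + t ^ 2 * ‖ω‖ ^ 2 := by
    intro t ht
    have hwC : u + t • ω ∈ C := hadd u huC _ (hCcone t ht ω hω)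
    have hmin' := hmin hwC
    simp only [Set.mem_setOf_eq] at hmin'
    have hEle : E (u + t • ω) ≤ E u := by
      have := hsub u (t • ω)
      rw [hEhom t ht ω, hEω] at this
      linarith
    have hnorm : ‖u + t • ω - p‖ ^ 2
        = ‖u - p‖ ^ 2 + 2 * (t * ⟪u - p, ω⟫) + t ^ 2 * ‖ω‖ ^ 2 := by
      have : u + t • ω - p = (u - p) + t • ω := by abel
      rw [this, @norm_add_sq_real, real_inner_smul_right, norm_smul]
      simp [mul_pow, abs_mul_abs_self, sq_abs]
      try ring
    have hc : 0 < 1 / (2 * h) := by positivity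
    have hsym : ⟪u - p, ω⟫ = ⟪ω, u - p⟫ := real_inner_comm _ _
    have hd : 0 ≤ 1 / (2 * h) * (2 * t * ⟪ω, u - p⟫ + t ^ 2 * ‖ω‖ ^ 2) := by
      have h1 : 1 / (2 * h) * ‖u - p‖ ^ 2 ≤ 1 / (2 * h) * ‖u + t • ω - p‖ ^ 2 := by
        linarith
      rw [hnorm, hsym] at h1
      nlinarith [h1]
    exact nonneg_of_mul_nonneg_right hd hc
  -- conclude ⟪ω, u - p⟫ ≥ 0
  have hfin : 0 ≤ ⟪ω, u - p⟫ := by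
    by_contra hneg
    push_neg at hneg
    set a := ⟪ω, u - p⟫
    rcases eq_or_lt_of_le (sq_nonneg ‖ω‖) with hb | hb
    · have := key 1 zero_le_one
      nlinarith
    · have hb' : (0:ℝ) < ‖ω‖ ^ 2 := hb
      have ht : (0:ℝ) ≤ -a / ‖ω‖ ^ 2 := div_nonneg (by linarith) hb'.le
      have e1 : (-a / ‖ω‖ ^ 2) * ‖ω‖ ^ 2 = -a := by
        exact div_mul_cancel₀ _ hb'.ne'
      have h3 := mul_nonneg hb'.le (key (-a / ‖ω‖ ^ 2) ht)
      nlinarith [h3, e1, hneg, sq_nonneg a]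
  simp only [inner_sub_right] at hfin
  linarith
end

section
/- Every firmly nonexpansive map T on a Hilbert space with nonempty fixed point set has weakly convergent Picard iterates: for any ω_1, the sequence ω_{k+1} = T(ω_k) converges weakly to some fixed point of T. -/
open scoped RealInnerProductSpace
open Filter

lemma weak_subseq {H : Type*} [NormedAddCommGroup H] [InnerProductSpace ℝ H]
    [CompleteSpace H] (u : ℕ → H) (C : ℝ) (hu : ∀ k, ‖u k‖ ≤ C) :
    ∃ φ : ℕ → ℕ, StrictMono φ ∧ ∃ p : H,
      ∀ y : H, Tendsto (fun j => ⟪y, u (φ j)⟫) atTop (nhds ⟪y, p⟫) := by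
  have hC0 : 0 ≤ C := (norm_nonneg _).trans (hu 0)
  -- compact set in product space
  set S : Set (ℕ → ℝ) := Set.univ.pi fun m => Set.Icc (-(‖u m‖ * C)) (‖u m‖ * C) with hSdef
  have hS : IsCompact S := isCompact_univ_pi fun m => isCompact_Icc
  have hg : ∀ k, (fun m => ⟪u m, u k⟫) ∈ S := by
    intro k
    intro m _
    have h1 : |⟪u m, u k⟫| ≤ ‖u m‖ * ‖u k‖ := abs_real_inner_le_norm _ _
    have h2 : ‖u m‖ * ‖u k‖ ≤ ‖u m‖ * C :=
      mul_le_mul_of_nonneg_left (hu k) (norm_nonneg _)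
    have := abs_le.mp (h1.trans h2)
    exact ⟨this.1, this.2⟩
  obtain ⟨f, -, φ, hφ, hconv⟩ := hS.isSeqCompact hg
  have coord : ∀ m, Tendsto (fun j => ⟪u m, u (φ j)⟫) atTop (nhds (f m)) := by
    intro m
    exact (tendsto_pi_nhds.mp hconv) m
  -- the set of y for which the limit exists
  set V : Set H := {y | ∃ L, Tendsto (fun j => ⟪y, u (φ j)⟫) atTop (nhds L)} with hVdef
  have hVu : ∀ m, u m ∈ V := fun m => ⟨f m, coord m⟩
  have hVadd : ∀ y z, y ∈ V → z ∈ V → y + z ∈ V := by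
    rintro y z ⟨L, hL⟩ ⟨M, hM⟩
    exact ⟨L + M, by simpa [inner_add_left] using hL.add hM⟩
  have hVsmul : ∀ (c : ℝ) y, y ∈ V → c • y ∈ V := by
    rintro c y ⟨L, hL⟩
    exact ⟨c * L, by simpa [real_inner_smul_left] using hL.const_mul c⟩
  have hVzero : (0 : H) ∈ V := ⟨0, by simpa using tendsto_const_nhds⟩
  -- V is closed
  have hVclosed : ∀ y ∈ closure V, y ∈ V := by
    intro y hy
    have hcauchy : CauchySeq (fun j => ⟪y, u (φ j)⟫) := by
      rw [Metric.cauchySeq_iff]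
      intro ε hε
      obtain ⟨y', hy'V, hy'⟩ : ∃ y' ∈ V, ‖y - y'‖ < ε / (4 * (C + 1)) := by
        have := Metric.mem_closure_iff.mp hy (ε / (4 * (C + 1)))
          (by positivity)
        obtain ⟨y', hy'V, hd⟩ := this
        exact ⟨y', hy'V, by rwa [← dist_eq_norm]⟩
      obtain ⟨L, hL⟩ := hy'V
      have hc : CauchySeq (fun j => ⟪y', u (φ j)⟫) := hL.cauchySeq
      obtain ⟨N, hN⟩ := Metric.cauchySeq_iff.mp hc (ε / 2) (by positivity)
      refine ⟨N, fun m hm n hn => ?_⟩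
      have key : ∀ k, |⟪y, u (φ k)⟫ - ⟪y', u (φ k)⟫| ≤ ε / 4 := by
        intro k
        have : ⟪y, u (φ k)⟫ - ⟪y', u (φ k)⟫ = ⟪y - y', u (φ k)⟫ := by
          rw [inner_sub_left]
        rw [this]
        have h1 : |⟪y - y', u (φ k)⟫| ≤ ‖y - y'‖ * ‖u (φ k)‖ := abs_real_inner_le_norm _ _
        have h2 : ‖y - y'‖ * ‖u (φ k)‖ ≤ (ε / (4 * (C + 1))) * (C + 1) := by
          apply mul_le_mul hy'.le ((hu _).trans (by linarith)) (norm_nonneg _)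
          positivity
        have h3 : (ε / (4 * (C + 1))) * (C + 1) = ε / 4 := by
          field_simp
        linarith [h1.trans h2]
      have h4 := hN m hm n hn
      rw [Real.dist_eq] at h4 ⊢
      have k1 := key m
      have k2 := key n
      have : ⟪y, u (φ m)⟫ - ⟪y, u (φ n)⟫ =
          (⟪y, u (φ m)⟫ - ⟪y', u (φ m)⟫) + (⟪y', u (φ m)⟫ - ⟪y', u (φ n)⟫)
          + (⟪y', u (φ n)⟫ - ⟪y, u (φ n)⟫) := by ring
      rw [this]
      calc |_| ≤ |⟪y, u (φ m)⟫ - ⟪y', u (φ m)⟫| + |⟪y', u (φ m)⟫ - ⟪y', u (φ n)⟫|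
            + |⟪y', u (φ n)⟫ - ⟪y, u (φ n)⟫| := by
              exact (abs_add_three _ _ _)
        _ < ε := by
              rw [abs_sub_comm  (⟪y', u (φ n)⟫)] at *
              linarith
    obtain ⟨L, hL⟩ := cauchySeq_tendsto_of_complete hcauchy
    exact ⟨L, hL⟩
  -- every y has a limit, via orthogonal projection onto closed span
  set K : Submodule ℝ H := (Submodule.span ℝ (Set.range u)).topologicalClosure with hKdef
  haveI : CompleteSpace K := (Submodule.span ℝ (Set.range u)).isClosed_topologicalClosure.completeSpace_coe
  have huK : ∀ k, u k ∈ K :=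
    fun k => Submodule.le_topologicalClosure _ (Submodule.subset_span ⟨k, rfl⟩)
  have hKV : ∀ y ∈ K, y ∈ V := by
    intro y hy
    have hspan : (Submodule.span ℝ (Set.range u) : Set H) ⊆ V := by
      intro z hz
      induction hz using Submodule.span_induction with
      | mem x hx => obtain ⟨m, rfl⟩ := hx; exact hVu m
      | zero => exact hVzero
      | add x y _ _ hx hy => exact hVadd _ _ hx hy
      | smul c x _ hx => exact hVsmul c x hx
    have : y ∈ closure (Submodule.span ℝ (Set.range u) : Set H) := hy
    exact hVclosed y (closure_mono hspan this)
  have hall : ∀ y : H, ∃ L, Tendsto (fun j => ⟪y, u (φ j)⟫) atTop (nhds L) := by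
    intro y
    set z := (K.orthogonalProjectionOnto y : H) with hz
    have hzV : z ∈ V := hKV z (K.orthogonalProjectionOnto y).2
    obtain ⟨L, hL⟩ := hzV
    refine ⟨L, ?_⟩
    have heq : ∀ k, ⟪y, u k⟫ = ⟪z, u k⟫ := by
      intro k
      have horth : y - z ∈ Kᗮ := K.sub_starProjection_mem_orthogonal y
      have : ⟪y - z, u k⟫ = 0 := by
        rw [real_inner_comm]
        exact (Submodule.mem_orthogonal K (y - z)).mp horth (u k) (huK k)
      have := inner_sub_left (𝕜 := ℝ) y z (u k)
      simp only [this] at *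
      linarith [inner_sub_left (𝕜 := ℝ) y z (u k)]
    simpa only [heq] using hL
  -- build the limit functional
  choose L hLt using hall
  have hmap_add : ∀ y z, L (y + z) = L y + L z := by
    intro y z
    refine tendsto_nhds_unique (hLt (y + z)) ?_
    simpa [inner_add_left] using (hLt y).add (hLt z)
  have hmap_smul : ∀ (c : ℝ) y, L (c • y) = c * L y := by
    intro c y
    refine tendsto_nhds_unique (hLt (c • y)) ?_
    simpa [real_inner_smul_left] using (hLt y).const_mul c
  have hbound : ∀ y, ‖L y‖ ≤ C * ‖y‖ := by
    intro y
    have : ∀ j, |⟪y, u (φ j)⟫| ≤ C * ‖y‖ := by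
      intro j
      calc |⟪y, u (φ j)⟫| ≤ ‖y‖ * ‖u (φ j)‖ := abs_real_inner_le_norm _ _
        _ ≤ ‖y‖ * C := mul_le_mul_of_nonneg_left (hu _) (norm_nonneg _)
        _ = C * ‖y‖ := mul_comm _ _
    have habs : Tendsto (fun j => |⟪y, u (φ j)⟫|) atTop (nhds |L y|) :=
      (hLt y).abs
    exact le_of_tendsto habs (Eventually.of_forall this)
  set E : H →ₗ[ℝ] ℝ :=
    { toFun := L, map_add' := hmap_add, map_smul' := hmap_smul } with hE
  set g : H →L[ℝ] ℝ := E.mkContinuous C hbound with hgdef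
  set p : H := (InnerProductSpace.toDual ℝ H).symm g with hp
  refine ⟨φ, hφ, p, fun y => ?_⟩
  have : ⟪p, y⟫ = g y := by
    rw [hp, ← InnerProductSpace.toDual_apply_apply]
    simp
  have hpy : ⟪y, p⟫ = L y := by
    rw [real_inner_comm]; exact this
  rw [hpy]; exact hLt y

/-- Picard iterates of a firmly nonexpansive map on a Hilbert space with a fixed point
converge weakly to a fixed point. -/
theorem stmt15 {H : Type*} [NormedAddCommGroup H] [InnerProductSpace ℝ H]
    [CompleteSpace H]
    (T : H → H) (hT : ∀ x y : H, ‖T x - T y‖ ^ 2 ≤ ⟪T x - T y, x - y⟫)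
    (hF : ∃ p : H, T p = p)
    (ω₁ : H) (seq : ℕ → H) (hseq0 : seq 0 = ω₁)
    (hseq : ∀ k : ℕ, seq (k + 1) = T (seq k)) :
    ∃ p : H, T p = p ∧
      ∀ y : H, Filter.Tendsto (fun k => ⟪y, seq k⟫) Filter.atTop (nhds ⟪y, p⟫) := by
  obtain ⟨p₀, hp₀⟩ := hF
  -- key inequality
  have key : ∀ p, T p = p → ∀ k,
      ‖seq (k+1) - p‖^2 + ‖seq (k+1) - seq k‖^2 ≤ ‖seq k - p‖^2 := by
    intro p hp k
    have h := hT (seq k) p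
    rw [hp, ← hseq k] at h
    have hid := norm_sub_sq_real (seq (k+1) - p) (seq k - p)
    have he : seq (k+1) - p - (seq k - p) = seq (k+1) - seq k := by abel
    rw [he] at hid
    linarith
  have keysq : ∀ p, T p = p → ∀ k, ‖seq (k+1) - p‖^2 ≤ ‖seq k - p‖^2 := by
    intro p hp k
    have := key p hp k
    nlinarith [sq_nonneg ‖seq (k+1) - seq k‖]
  have hanti : ∀ p, T p = p → Antitone (fun k => ‖seq k - p‖^2) :=
    fun p hp => antitone_nat_of_succ_le (fun k => keysq p hp k)
  have hdist : ∀ p, T p = p → ∃ d, Tendsto (fun k => ‖seq k - p‖^2) atTop (nhds d) := by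
    intro p hp
    refine ⟨_, tendsto_atTop_ciInf (hanti p hp) ⟨0, ?_⟩⟩
    rintro x ⟨k, rfl⟩
    positivity
  -- uniform bound
  set C : ℝ := ‖seq 0 - p₀‖ + ‖p₀‖ with hC
  have hbd : ∀ k, ‖seq k‖ ≤ C := by
    intro k
    have h1 : ‖seq k - p₀‖^2 ≤ ‖seq 0 - p₀‖^2 := hanti p₀ hp₀ (Nat.zero_le k)
    have h2 : ‖seq k - p₀‖ ≤ ‖seq 0 - p₀‖ :=
      le_of_pow_le_pow_left₀ two_ne_zero (norm_nonneg _) h1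
    calc ‖seq k‖ = ‖(seq k - p₀) + p₀‖ := by rw [sub_add_cancel]
      _ ≤ ‖seq k - p₀‖ + ‖p₀‖ := norm_add_le _ _
      _ ≤ C := by rw [hC]; linarith
  -- asymptotic regularity
  have hreg : Tendsto (fun k => ‖seq (k+1) - seq k‖) atTop (nhds 0) := by
    have hsum : ∀ n, ∑ i ∈ Finset.range n, ‖seq (i+1) - seq i‖^2
        ≤ ‖seq 0 - p₀‖^2 - ‖seq n - p₀‖^2 := by
      intro n
      induction n with
      | zero => simp
      | succ n ih =>
        rw [Finset.sum_range_succ]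
        have := key p₀ hp₀ n
        linarith
    have hsummable : Summable (fun k => ‖seq (k+1) - seq k‖^2) := by
      apply summable_of_sum_range_le (c := ‖seq 0 - p₀‖^2) (fun k => sq_nonneg _)
      intro n
      have := hsum n
      nlinarith [sq_nonneg ‖seq n - p₀‖]
    have h0 : Tendsto (fun k => ‖seq (k+1) - seq k‖^2) atTop (nhds 0) :=
      hsummable.tendsto_atTop_zero
    have h1 : Tendsto (fun k => Real.sqrt (‖seq (k+1) - seq k‖^2)) atTop
        (nhds (Real.sqrt 0)) := (Real.continuous_sqrt.tendsto 0).comp h0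
    simpa only [Real.sqrt_sq (norm_nonneg _), Real.sqrt_zero] using h1
  -- demiclosedness along subsequences
  have demiclosed : ∀ (ns : ℕ → ℕ), Tendsto ns atTop atTop → ∀ p : H,
      (∀ y, Tendsto (fun j => ⟪y, seq (ns j)⟫) atTop (nhds ⟪y, p⟫)) → T p = p := by
    intro ns hns p hw
    set v : ℕ → H := fun j => seq (ns j) with hv
    set ε : ℕ → H := fun j => seq (ns j + 1) - seq (ns j) with hε
    have hεn : Tendsto (fun j => ‖ε j‖) atTop (nhds 0) := hreg.comp hns
    have hineq : ∀ j, 2*⟪v j - T p, ε j⟫ + ‖ε j‖^2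
        ≤ ⟪v j - T p, T p - p⟫ + ⟪ε j, v j - p⟫ := by
      intro j
      have h := hT (v j) p
      have hTv : T (v j) = v j + ε j := by
        simp only [hv, hε, ← hseq]
        abel
      rw [hTv] at h
      have e1 : v j + ε j - T p = (v j - T p) + ε j := by abel
      rw [e1, norm_add_sq_real, inner_add_left] at h
      have e3 : ⟪v j - T p, v j - p⟫ = ‖v j - T p‖^2 + ⟪v j - T p, T p - p⟫ := by
        have e4 : v j - p = (v j - T p) + (T p - p) := by abel
        rw [e4, inner_add_right, real_inner_self_eq_norm_sq]
      rw [e3] at h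
      linarith
    have bddv : ∀ j (w : H), |⟪v j - w, ε j⟫| ≤ (C + ‖w‖) * ‖ε j‖ := by
      intro j w
      calc |⟪v j - w, ε j⟫| ≤ ‖v j - w‖ * ‖ε j‖ := abs_real_inner_le_norm _ _
        _ ≤ (C + ‖w‖) * ‖ε j‖ := by
            apply mul_le_mul_of_nonneg_right _ (norm_nonneg _)
            calc ‖v j - w‖ ≤ ‖v j‖ + ‖w‖ := norm_sub_le _ _
              _ ≤ C + ‖w‖ := by linarith [hbd (ns j)]
    have l1 : Tendsto (fun j => ⟪v j - T p, ε j⟫) atTop (nhds 0) := by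
      apply squeeze_zero_norm (fun j => bddv j (T p))
      simpa using hεn.const_mul (C + ‖T p‖)
    have l2 : Tendsto (fun j => ‖ε j‖^2) atTop (nhds 0) := by
      have := hεn.mul hεn
      simpa [pow_two] using this
    have l4 : Tendsto (fun j => ⟪ε j, v j - p⟫) atTop (nhds 0) := by
      apply squeeze_zero_norm (fun j => ?_) (by simpa using hεn.const_mul (C + ‖p‖))
      calc ‖⟪ε j, v j - p⟫‖ = |⟪v j - p, ε j⟫| := by rw [real_inner_comm]; rfl
        _ ≤ (C + ‖p‖) * ‖ε j‖ := bddv j p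
    have l3 : Tendsto (fun j => ⟪v j - T p, T p - p⟫) atTop (nhds (-‖T p - p‖^2)) := by
      have he : ∀ j, ⟪v j - T p, T p - p⟫ = ⟪T p - p, v j⟫ - ⟪T p - p, T p⟫ := by
        intro j
        rw [real_inner_comm, inner_sub_right]
      have ht : Tendsto (fun j => ⟪T p - p, v j⟫ - ⟪T p - p, T p⟫) atTop
          (nhds (⟪T p - p, p⟫ - ⟪T p - p, T p⟫)) := (hw (T p - p)).sub tendsto_const_nhds
      have hval : ⟪T p - p, p⟫ - ⟪T p - p, T p⟫ = -‖T p - p‖^2 := by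
        rw [← inner_sub_right, show p - T p = -(T p - p) by abel, inner_neg_right,
          real_inner_self_eq_norm_sq]
      rw [← hval]
      simpa only [he] using ht
    have hle : (0:ℝ) ≤ -‖T p - p‖^2 + 0 := by
      have lhs : Tendsto (fun j => 2*⟪v j - T p, ε j⟫ + ‖ε j‖^2) atTop (nhds 0) := by
        simpa using (l1.const_mul 2).add l2
      have rhs := l3.add l4
      exact le_of_tendsto_of_tendsto' lhs rhs hineq
    have : ‖T p - p‖ = 0 := by nlinarith [norm_nonneg (T p - p)]
    have := norm_eq_zero.mp this
    rw [sub_eq_zero] at this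
    exact this
  -- main extraction
  obtain ⟨φ₀, hφ₀, p, hp⟩ := weak_subseq seq C hbd
  have hpfix : T p = p := demiclosed φ₀ hφ₀.tendsto_atTop p hp
  refine ⟨p, hpfix, fun y => ?_⟩
  apply tendsto_of_subseq_tendsto
  intro ns hns
  obtain ⟨φ, hφ, q, hq⟩ := weak_subseq (fun j => seq (ns j)) C (fun j => hbd _)
  have hqfix : T q = q :=
    demiclosed (fun j => ns (φ j)) (hns.comp hφ.tendsto_atTop) q hq
  have hpq : p = q := by
    obtain ⟨dp, hdp⟩ := hdist p hpfix
    obtain ⟨dq, hdq⟩ := hdist q hqfix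
    have hc : ∀ k, ‖seq k - q‖^2 - ‖seq k - p‖^2
        = 2*⟪p - q, seq k⟫ + ‖q‖^2 - ‖p‖^2 := by
      intro k
      have h1 := norm_sub_sq_real (seq k) q
      have h2 := norm_sub_sq_real (seq k) p
      have h3 : ⟪p - q, seq k⟫ = ⟪seq k, p⟫ - ⟪seq k, q⟫ := by
        rw [inner_sub_left, real_inner_comm p, real_inner_comm q]
      linarith
    have hct : Tendsto (fun k => 2*⟪p - q, seq k⟫ + ‖q‖^2 - ‖p‖^2) atTop
        (nhds (dq - dp)) := by
      have := hdq.sub hdp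
      simp only [← hc]
      exact this
    have e1 : 2*⟪p - q, p⟫ + ‖q‖^2 - ‖p‖^2 = dq - dp := by
      have ha := hct.comp hφ₀.tendsto_atTop
      have hb : Tendsto (fun j => 2*⟪p - q, seq (φ₀ j)⟫ + ‖q‖^2 - ‖p‖^2) atTop
          (nhds (2*⟪p - q, p⟫ + ‖q‖^2 - ‖p‖^2)) := by
        have := (hp (p - q)).const_mul 2
        exact (this.add_const (‖q‖^2)).sub_const (‖p‖^2)
      exact tendsto_nhds_unique hb ha
    have e2 : 2*⟪p - q, q⟫ + ‖q‖^2 - ‖p‖^2 = dq - dp := by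
      have ha := hct.comp (hns.comp hφ.tendsto_atTop)
      have hb : Tendsto (fun j => 2*⟪p - q, seq (ns (φ j))⟫ + ‖q‖^2 - ‖p‖^2) atTop
          (nhds (2*⟪p - q, q⟫ + ‖q‖^2 - ‖p‖^2)) := by
        have := (hq (p - q)).const_mul 2
        exact (this.add_const (‖q‖^2)).sub_const (‖p‖^2)
      exact tendsto_nhds_unique hb ha
    have hinner : ⟪p - q, p⟫ = ⟪p - q, q⟫ := by linarith
    have : ⟪p - q, p - q⟫ = 0 := by
      rw [inner_sub_right, hinner]; ring
    have := inner_self_eq_zero.mp this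
    rw [sub_eq_zero] at this
    exact this
  refine ⟨φ, ?_⟩
  rw [hpq]
  exact hq y
end
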